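/- Let T be a finite tree on vertices {0,…,n−1} with n ≥ 2, and let b_e ≠ 0 for each edge e. If angles θ₀ = 0, θ₁,…,θ_{n−1} ∈ ℝ satisfy, for each vertex k = 1,…,n−1, Σ_{m adjacent to k} b_{km} sin(θ_k − θ_m) = 0, then sin(θ_k − θ_m) = 0 for every edge {k, m} of T; consequently every θ_k is an integer multiple of π. -/

import Mathlib

open Finset

/-- Sum of an antisymmetric function over a swap-invariant finset of pairs is zero. -/
lemma antisym_pair_sum {V : Type*} (s : Finset (V × V))
    (hs : ∀ p ∈ s, p.swap ∈ s) (f : V → V → ℝ)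
    (hf : ∀ x y, f x y = - f y x) :
    ∑ p ∈ s, f p.1 p.2 = 0 := by
  refine Finset.sum_involution (fun p _ => p.swap) ?_ ?_ (fun p hp => hs p hp) ?_
  · intro p _; simp [hf p.1 p.2]
  · intro p _ hne heq
    apply hne
    have : p.1 = p.2 := by
      have := congrArg Prod.fst heq; simpa [Prod.swap] using this.symm
    rw [this] at *
    have h := hf p.2 p.2
    linarith
  · intro p _; simp

/-- A divergence-free antisymmetric flow on a finite acyclic graph vanishes on every edge. -/
lemma flow_zero {V : Type*} [Fintype V] [DecidableEq V]
    (G : SimpleGraph V) [DecidableRel G.Adj] (hac : G.IsAcyclic)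
    (f : V → V → ℝ) (hanti : ∀ x y, f x y = - f y x)
    (hdiv : ∀ x, ∑ y ∈ Finset.univ.filter (fun y => G.Adj x y), f x y = 0) :
    ∀ k m, G.Adj k m → f k m = 0 := by
  classical
  intro k m hadj
  have hbr : ¬ (G \ SimpleGraph.fromEdgeSet {s(k, m)}).Reachable k m := by
    have := (SimpleGraph.isAcyclic_iff_forall_adj_isBridge.mp hac) hadj
    exact SimpleGraph.isBridge_iff.mp this
  set G' := G \ SimpleGraph.fromEdgeSet {s(k, m)} with hG'
  set S : Finset V := Finset.univ.filter (fun x => G'.Reachable m x) with hS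
  have hmS : m ∈ S := by
    simp only [hS, Finset.mem_filter, Finset.mem_univ, true_and]
    exact SimpleGraph.Reachable.refl m
  have hkS : k ∉ S := by
    simp only [hS, Finset.mem_filter, Finset.mem_univ, true_and]
    intro h; exact hbr h.symm
  have cross : ∀ x y, x ∈ S → y ∉ S → G.Adj x y → x = m ∧ y = k := by
    intro x y hx hy hxy
    have hxS : G'.Reachable m x := by
      simpa [hS] using hx
    by_cases he : s(x, y) = s(k, m)
    · rcases (Sym2.eq_iff.mp he) with ⟨rfl, rfl⟩ | ⟨rfl, rfl⟩
      · exact absurd hx hkS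
      · exact ⟨rfl, rfl⟩
    · exfalso
      have hadj' : G'.Adj x y := by
        rw [hG']
        simp only [SimpleGraph.sdiff_adj, SimpleGraph.fromEdgeSet_adj,
          Set.mem_singleton_iff]
        exact ⟨hxy, fun h => he h.1⟩
      exact hy (by simp [hS]; exact hxS.trans hadj'.reachable)
  -- the big sum
  set Q : Finset (V × V) :=
    (S ×ˢ Finset.univ).filter (fun p => G.Adj p.1 p.2) with hQ
  have hsum : ∑ p ∈ Q, f p.1 p.2 = 0 := by
    rw [hQ, Finset.sum_filter, Finset.sum_product]
    calc ∑ x ∈ S, ∑ y, (if G.Adj x y then f x y else 0)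
        = ∑ x ∈ S, ∑ y ∈ Finset.univ.filter (fun y => G.Adj x y), f x y := by
          refine Finset.sum_congr rfl fun x _ => ?_
          rw [Finset.sum_filter]
      _ = 0 := Finset.sum_eq_zero fun x _ => hdiv x
  have hsplit := Finset.sum_filter_add_sum_filter_not Q (fun p => p.2 ∈ S)
    (fun p => f p.1 p.2)
  have hin : ∑ p ∈ Q.filter (fun p => p.2 ∈ S), f p.1 p.2 = 0 := by
    refine antisym_pair_sum _ ?_ f hanti
    intro p hp
    simp only [hQ, Finset.mem_filter, Finset.mem_product, Finset.mem_univ, and_true,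
      true_and] at hp ⊢
    exact ⟨⟨hp.2, hp.1.2.symm⟩, hp.1.1⟩
  have hout : Q.filter (fun p => p.2 ∉ S) = {(m, k)} := by
    ext p
    simp only [hQ, Finset.mem_filter, Finset.mem_product, Finset.mem_univ, and_true,
      Finset.mem_singleton]
    constructor
    · rintro ⟨⟨h1, h2⟩, h3⟩
      obtain ⟨rfl, rfl⟩ := cross p.1 p.2 h1 h3 h2
      rfl
    · rintro rfl
      exact ⟨⟨hmS, hadj.symm⟩, hkS⟩
  rw [hout, Finset.sum_singleton] at hsplit
  have : f m k = 0 := by rw [hsum] at hsplit; linarith [hin, hsplit]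
  rw [hanti k m, this, neg_zero]

theorem stmt_13 (n : ℕ) (hn : 2 ≤ n) (G : SimpleGraph (Fin n))
    [DecidableRel G.Adj] (hT : G.IsTree)
    (b : Fin n → Fin n → ℝ) (hsym : ∀ k m, b k m = b m k)
    (hbne : ∀ k m, G.Adj k m → b k m ≠ 0)
    (θ : Fin n → ℝ) (hθ0 : θ ⟨0, by omega⟩ = 0)
    (hbal : ∀ k : Fin n, k ≠ ⟨0, by omega⟩ →
      ∑ m ∈ Finset.univ.filter (fun m => G.Adj k m),
        b k m * Real.sin (θ k - θ m) = 0) :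
    (∀ k m, G.Adj k m → Real.sin (θ k - θ m) = 0) ∧
      ∀ k, ∃ z : ℤ, θ k = z * Real.pi := by
  classical
  set v0 : Fin n := ⟨0, by omega⟩ with hv0
  set f : Fin n → Fin n → ℝ := fun x y => b x y * Real.sin (θ x - θ y) with hf
  have hanti : ∀ x y, f x y = - f y x := by
    intro x y
    simp only [hf]
    rw [hsym x y]
    have : θ x - θ y = -(θ y - θ x) := by ring
    rw [this, Real.sin_neg]
    ring
  -- divergence vanishes everywhere, including at v0
  have hdiv : ∀ x, ∑ y ∈ Finset.univ.filter (fun y => G.Adj x y), f x y = 0 := by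
    intro x
    by_cases hx : x = v0
    · subst hx
      -- total sum over all pairs is zero by antisymmetry
      have htot : ∑ x : Fin n, ∑ y ∈ Finset.univ.filter (fun y => G.Adj x y), f x y = 0 := by
        have : ∑ x : Fin n, ∑ y ∈ Finset.univ.filter (fun y => G.Adj x y), f x y
            = ∑ p ∈ (Finset.univ ×ˢ Finset.univ).filter
                (fun p : Fin n × Fin n => G.Adj p.1 p.2), f p.1 p.2 := by
          rw [Finset.sum_filter, Finset.sum_product]
          refine Finset.sum_congr rfl fun x _ => ?_
          rw [Finset.sum_filter]
        rw [this]
        refine antisym_pair_sum _ ?_ f hanti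
        intro p hp
        simp only [Finset.mem_filter, Finset.mem_product, Finset.mem_univ, true_and,
          and_true] at hp ⊢
        exact hp.symm
      have hothers : ∀ x ∈ Finset.univ.erase v0,
          ∑ y ∈ Finset.univ.filter (fun y => G.Adj x y), f x y = 0 := by
        intro x hx
        exact hbal x (Finset.mem_erase.mp hx).1
      have := Finset.add_sum_erase Finset.univ
        (fun x => ∑ y ∈ Finset.univ.filter (fun y => G.Adj x y), f x y)
        (Finset.mem_univ v0)
      rw [Finset.sum_eq_zero hothers] at this
      rw [htot] at this
      linarith
    · exact hbal x hx
  have hedge : ∀ k m, G.Adj k m → Real.sin (θ k - θ m) = 0 := by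
    intro k m hkm
    have := flow_zero G hT.IsAcyclic f hanti hdiv k m hkm
    simp only [hf] at this
    rcases mul_eq_zero.mp this with h | h
    · exact absurd h (hbne k m hkm)
    · exact h
  refine ⟨hedge, ?_⟩
  intro k
  have hreach : G.Reachable v0 k := hT.isConnected.preconnected v0 k
  obtain ⟨p⟩ := hreach
  have key : ∀ (u v : Fin n) (q : G.Walk u v), (∃ z : ℤ, θ u = z * Real.pi) →
      ∃ z : ℤ, θ v = z * Real.pi := by
    intro u v q
    induction q with
    | nil => exact id
    | cons h q ih =>
      rename_i a c d
      intro ⟨z, hz⟩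
      apply ih
      have hs := hedge a c h
      rw [Real.sin_eq_zero_iff] at hs
      obtain ⟨w, hw⟩ := hs
      exact ⟨z - w, by push_cast; linarith [hw, hz]⟩
  exact key v0 k p ⟨0, by simp [hθ0]⟩
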